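/- Let T be a transit cluster in a DAG G = (V,E) and let G' be the graph induced by clustering T into a single vertex t. For any S ⊆ V \ T, the set {t} ∪ S is a transit cluster in G' if and only if T ∪ S is a transit cluster in G. (Modularity of transit clusters.) -/

import Mathlib

variable {α : Type*}

/-- All edges lie within the vertex set `V`. -/
def EdgesIn (V : Set α) (E : α → α → Prop) : Prop :=
  ∀ u v, E u v → u ∈ V ∧ v ∈ V

/-- The edge relation has no directed cycles. -/
def Acyclic (E : α → α → Prop) : Prop :=
  ∀ v, ¬ Relation.TransGen E v v

/-- A finite directed acyclic graph on vertex set `V`. -/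
def IsDAG (V : Set α) (E : α → α → Prop) : Prop :=
  V.Finite ∧ EdgesIn V E ∧ Acyclic E

/-- Receivers of `T`: members of `T` with a parent outside `T`. -/
def recs (E : α → α → Prop) (T : Set α) : Set α :=
  {v | v ∈ T ∧ ∃ u, u ∉ T ∧ E u v}

/-- Emitters of `T`: members of `T` with a child outside `T`. -/
def emis (E : α → α → Prop) (T : Set α) : Set α :=
  {v | v ∈ T ∧ ∃ u, u ∉ T ∧ E v u}

/-- Edges of `G[T^=]`: the subgraph induced by `T` with incoming edges of
receivers and outgoing edges of emitters removed. -/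
def CutEdge (E : α → α → Prop) (T : Set α) (u v : α) : Prop :=
  u ∈ T ∧ v ∈ T ∧ E u v ∧ v ∉ recs E T ∧ u ∉ emis E T

/-- Undirected reachability with respect to an edge relation. -/
def UndirReach (E : α → α → Prop) (u v : α) : Prop :=
  Relation.ReflTransGen (fun a b => E a b ∨ E b a) u v

/-- `T` is a transit cluster in the graph `(V, E)`. -/
def IsTransitCluster (V : Set α) (E : α → α → Prop) (T : Set α) : Prop :=
  T.Nonempty ∧ T ⊂ V ∧
  (∀ r₁ ∈ recs E T, ∀ r₂ ∈ recs E T,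
    {u | u ∉ T ∧ E u r₁} = {u | u ∉ T ∧ E u r₂}) ∧
  (∀ e₁ ∈ emis E T, ∀ e₂ ∈ emis E T,
    {u | u ∉ T ∧ E e₁ u} = {u | u ∉ T ∧ E e₂ u}) ∧
  (∀ x ∈ T, ∃ w, (w ∈ recs E T ∨ w ∈ emis E T) ∧ UndirReach (CutEdge E T) x w) ∧
  ((emis E T).Nonempty → ∀ r ∈ recs E T, ∃ e ∈ emis E T, Relation.ReflTransGen E r e) ∧
  ((recs E T).Nonempty → ∀ e ∈ emis E T, ∃ r ∈ recs E T, Relation.ReflTransGen E r e)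

/-- Vertex set of the graph obtained by clustering `T` into the new vertex `t`. -/
def ClusterVerts (V T : Set α) (t : α) : Set α := (V \ T) ∪ {t}

/-- Edge relation of the graph obtained by clustering `T` into the new vertex `t`:
edges not touching `T` are kept, the parents of `t` are the external parents of
`recs T`, and the children of `t` are the external children of `emis T`. -/
def ClusterEdge (E : α → α → Prop) (T : Set α) (t : α) (u v : α) : Prop :=
  (u ∉ T ∧ v ∉ T ∧ E u v) ∨
  (u ∉ T ∧ u ≠ t ∧ v = t ∧ ∃ r ∈ recs E T, E u r) ∨
  (u = t ∧ v ∉ T ∧ v ≠ t ∧ ∃ e ∈ emis E T, E e v)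

/-- A transit component: a transit cluster that is connected (undirectedly)
in the subgraph it induces. -/
def IsTransitComponent (V : Set α) (E : α → α → Prop) (T : Set α) : Prop :=
  IsTransitCluster V E T ∧
  ∀ u ∈ T, ∀ v ∈ T, UndirReach (fun a b => a ∈ T ∧ b ∈ T ∧ E a b) u v

section TCM
variable {V : Set α} {E : α → α → Prop} {T S : Set α} {t : α}

lemma tcm_undir_symm {R : α → α → Prop} {a b : α} (h : UndirReach R a b) :
    UndirReach R b a :=
  by
    haveI : Std.Symm (fun a b => R a b ∨ R b a) := ⟨fun _ _ h => h.symm⟩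
    exact Std.Symm.symm (r := Relation.ReflTransGen (fun a b => R a b ∨ R b a)) _ _ h

lemma tcm_undir_single {R : α → α → Prop} {a b : α} (h : R a b ∨ R b a) :
    UndirReach R a b :=
  Relation.ReflTransGen.single h

lemma tcm_edge_ne (hE : EdgesIn V E) (ht : t ∉ V) {u v : α} (h : E u v) :
    u ≠ t ∧ v ≠ t := by
  obtain ⟨hu, hv⟩ := hE u v h
  exact ⟨fun h' => ht (h' ▸ hu), fun h' => ht (h' ▸ hv)⟩

lemma tcm_ce_tt (hE : EdgesIn V E) (ht : t ∉ V) : ¬ ClusterEdge E T t t t := by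
  rintro (⟨_, _, h⟩ | ⟨_, h, _⟩ | ⟨_, _, h, _⟩)
  · exact (tcm_edge_ne hE ht h).1 rfl
  · exact h rfl
  · exact h rfl

lemma tcm_ce_to_t (hE : EdgesIn V E) (ht : t ∉ V) {u : α} :
    ClusterEdge E T t u t ↔ u ∉ T ∧ u ≠ t ∧ ∃ r ∈ recs E T, E u r := by
  constructor
  · rintro (⟨_, _, h⟩ | ⟨h1, h2, _, h4⟩ | ⟨_, _, h, _⟩)
    · exact absurd rfl (tcm_edge_ne hE ht h).2
    · exact ⟨h1, h2, h4⟩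
    · exact absurd rfl h
  · rintro ⟨h1, h2, h3⟩
    exact Or.inr (Or.inl ⟨h1, h2, rfl, h3⟩)

lemma tcm_ce_from_t (hE : EdgesIn V E) (ht : t ∉ V) {v : α} :
    ClusterEdge E T t t v ↔ v ∉ T ∧ v ≠ t ∧ ∃ e ∈ emis E T, E e v := by
  constructor
  · rintro (⟨_, _, h⟩ | ⟨_, h, _⟩ | ⟨_, h2, h3, h4⟩)
    · exact absurd rfl (tcm_edge_ne hE ht h).1
    · exact absurd rfl h
    · exact ⟨h2, h3, h4⟩
  · rintro ⟨h1, h2, h3⟩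
    exact Or.inr (Or.inr ⟨rfl, h1, h2, h3⟩)

lemma tcm_ce_nt {u v : α} (hu : u ≠ t) (hv : v ≠ t) :
    ClusterEdge E T t u v ↔ u ∉ T ∧ v ∉ T ∧ E u v := by
  constructor
  · rintro (h | ⟨_, _, h, _⟩ | ⟨h, _⟩)
    · exact h
    · exact absurd h hv
    · exact absurd h hu
  · exact fun h => Or.inl h

end TCM

section TCM2
variable {V : Set α} {E : α → α → Prop} {T S : Set α} {t : α}

lemma tcm_tS (ht : t ∉ V) (hS : S ⊆ V \ T) : t ∉ S := fun h => ht (hS h).1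

lemma tcm_tT (ht : t ∉ V) (hTV : T ⊆ V) : t ∉ T := fun h => ht (hTV h)

lemma tcm_mem_recs {v : α} : v ∈ recs E T ↔ v ∈ T ∧ ∃ u, u ∉ T ∧ E u v := Iff.rfl

lemma tcm_mem_emis {v : α} : v ∈ emis E T ↔ v ∈ T ∧ ∃ u, u ∉ T ∧ E v u := Iff.rfl

lemma tcm_pset'_S (hE : EdgesIn V E) (ht : t ∉ V) (hS : S ⊆ V \ T) {v : α} (hv : v ∈ S) :
    {u | u ∉ insert t S ∧ ClusterEdge E T t u v} = {u | u ∉ T ∪ S ∧ E u v} := by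
  ext u
  simp only [Set.mem_setOf_eq, Set.mem_insert_iff, Set.mem_union, not_or]
  constructor
  · rintro ⟨⟨hut, huS⟩, hce⟩
    have hvt : v ≠ t := fun h => tcm_tS ht hS (h ▸ hv)
    rcases (tcm_ce_nt hut hvt).1 hce with ⟨huT, _, he⟩
    exact ⟨⟨huT, huS⟩, he⟩
  · rintro ⟨⟨huT, huS⟩, he⟩
    exact ⟨⟨(tcm_edge_ne hE ht he).1, huS⟩, Or.inl ⟨huT, (hS hv).2, he⟩⟩

lemma tcm_cset'_S (hE : EdgesIn V E) (ht : t ∉ V) (hS : S ⊆ V \ T) {v : α} (hv : v ∈ S) :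
    {u | u ∉ insert t S ∧ ClusterEdge E T t v u} = {u | u ∉ T ∪ S ∧ E v u} := by
  ext u
  simp only [Set.mem_setOf_eq, Set.mem_insert_iff, Set.mem_union, not_or]
  constructor
  · rintro ⟨⟨hut, huS⟩, hce⟩
    have hvt : v ≠ t := fun h => tcm_tS ht hS (h ▸ hv)
    rcases (tcm_ce_nt hvt hut).1 hce with ⟨_, huT, he⟩
    exact ⟨⟨huT, huS⟩, he⟩
  · rintro ⟨⟨huT, huS⟩, he⟩
    exact ⟨⟨(tcm_edge_ne hE ht he).2, huS⟩, Or.inl ⟨(hS hv).2, huT, he⟩⟩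

lemma tcm_recs'_S (hE : EdgesIn V E) (ht : t ∉ V) (hS : S ⊆ V \ T) {v : α} (hv : v ∈ S) :
    v ∈ recs (ClusterEdge E T t) (insert t S) ↔ v ∈ recs E (T ∪ S) := by
  have hps := Set.ext_iff.1 (tcm_pset'_S hE ht hS hv)
  simp only [Set.mem_setOf_eq] at hps
  constructor
  · rintro ⟨_, u, hu⟩
    exact ⟨Or.inr hv, u, (hps u).1 hu⟩
  · rintro ⟨_, u, hu⟩
    exact ⟨Set.mem_insert_iff.2 (Or.inr hv), u, (hps u).2 hu⟩

lemma tcm_emis'_S (hE : EdgesIn V E) (ht : t ∉ V) (hS : S ⊆ V \ T) {v : α} (hv : v ∈ S) :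
    v ∈ emis (ClusterEdge E T t) (insert t S) ↔ v ∈ emis E (T ∪ S) := by
  have hps := Set.ext_iff.1 (tcm_cset'_S hE ht hS hv)
  simp only [Set.mem_setOf_eq] at hps
  constructor
  · rintro ⟨_, u, hu⟩
    exact ⟨Or.inr hv, u, (hps u).1 hu⟩
  · rintro ⟨_, u, hu⟩
    exact ⟨Set.mem_insert_iff.2 (Or.inr hv), u, (hps u).2 hu⟩

lemma tcm_recs'_t (hE : EdgesIn V E) (ht : t ∉ V) (hS : S ⊆ V \ T) :
    t ∈ recs (ClusterEdge E T t) (insert t S) ↔ ∃ v, v ∈ T ∧ v ∈ recs E (T ∪ S) := by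
  constructor
  · rintro ⟨_, u, huT', hce⟩
    rcases (tcm_ce_to_t hE ht).1 hce with ⟨huT, hut, r, hr, he⟩
    have huS : u ∉ S := fun h => huT' (Set.mem_insert_iff.2 (Or.inr h))
    exact ⟨r, hr.1, ⟨Or.inl hr.1, u, fun h => h.elim huT huS, he⟩⟩
  · rintro ⟨v, hvT, _, u, huU, he⟩
    have huT : u ∉ T := fun h => huU (Or.inl h)
    have huS : u ∉ S := fun h => huU (Or.inr h)
    refine ⟨Set.mem_insert _ _, u, ?_, (tcm_ce_to_t hE ht).2
      ⟨huT, (tcm_edge_ne hE ht he).1, v, ⟨hvT, u, huT, he⟩, he⟩⟩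
    simp only [Set.mem_insert_iff, not_or]
    exact ⟨(tcm_edge_ne hE ht he).1, huS⟩

lemma tcm_emis'_t (hE : EdgesIn V E) (ht : t ∉ V) (hS : S ⊆ V \ T) :
    t ∈ emis (ClusterEdge E T t) (insert t S) ↔ ∃ v, v ∈ T ∧ v ∈ emis E (T ∪ S) := by
  constructor
  · rintro ⟨_, u, huT', hce⟩
    rcases (tcm_ce_from_t hE ht).1 hce with ⟨huT, hut, e, he, hee⟩
    have huS : u ∉ S := fun h => huT' (Set.mem_insert_iff.2 (Or.inr h))
    exact ⟨e, he.1, ⟨Or.inl he.1, u, fun h => h.elim huT huS, hee⟩⟩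
  · rintro ⟨v, hvT, _, u, huU, he⟩
    have huT : u ∉ T := fun h => huU (Or.inl h)
    have huS : u ∉ S := fun h => huU (Or.inr h)
    refine ⟨Set.mem_insert _ _, u, ?_, (tcm_ce_from_t hE ht).2
      ⟨huT, (tcm_edge_ne hE ht he).2, v, ⟨hvT, u, huT, he⟩, he⟩⟩
    simp only [Set.mem_insert_iff, not_or]
    exact ⟨(tcm_edge_ne hE ht he).2, huS⟩

lemma tcm_recsU_T {v : α} (hv : v ∈ T) (h : v ∈ recs E (T ∪ S)) : v ∈ recs E T := by
  obtain ⟨_, u, huU, he⟩ := h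
  exact ⟨hv, u, fun h => huU (Or.inl h), he⟩

lemma tcm_emisU_T {v : α} (hv : v ∈ T) (h : v ∈ emis E (T ∪ S)) : v ∈ emis E T := by
  obtain ⟨_, u, huU, he⟩ := h
  exact ⟨hv, u, fun h => huU (Or.inl h), he⟩

end TCM2

section TCM3
variable {V : Set α} {E : α → α → Prop} {T S : Set α} {t : α}

/-- condition 3 of a transit cluster -/
def Cond3 (E : α → α → Prop) (T : Set α) : Prop :=
  ∀ r₁ ∈ recs E T, ∀ r₂ ∈ recs E T, {u | u ∉ T ∧ E u r₁} = {u | u ∉ T ∧ E u r₂}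

/-- condition 4 of a transit cluster -/
def Cond4 (E : α → α → Prop) (T : Set α) : Prop :=
  ∀ e₁ ∈ emis E T, ∀ e₂ ∈ emis E T, {u | u ∉ T ∧ E e₁ u} = {u | u ∉ T ∧ E e₂ u}

lemma tcm_parent_all (h3 : Cond3 E T) {r r' u : α} (hr : r ∈ recs E T)
    (hr' : r' ∈ recs E T) (hu : u ∉ T) (he : E u r) : E u r' := by
  have := Set.ext_iff.1 (h3 r hr r' hr') u
  simp only [Set.mem_setOf_eq] at this
  exact (this.1 ⟨hu, he⟩).2

lemma tcm_child_all (h4 : Cond4 E T) {e e' u : α} (he : e ∈ emis E T)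
    (he' : e' ∈ emis E T) (hu : u ∉ T) (hee : E e u) : E e' u := by
  have := Set.ext_iff.1 (h4 e he e' he') u
  simp only [Set.mem_setOf_eq] at this
  exact (this.1 ⟨hu, hee⟩).2

lemma tcm_recsU_all (h3 : Cond3 E T) {r r' : α} (hr : r ∈ recs E T)
    (hr' : r' ∈ recs E T) (h : r ∈ recs E (T ∪ S)) : r' ∈ recs E (T ∪ S) := by
  obtain ⟨_, u, huU, he⟩ := h
  exact ⟨Or.inl hr'.1, u, huU, tcm_parent_all h3 hr hr' (fun h => huU (Or.inl h)) he⟩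

lemma tcm_emisU_all (h4 : Cond4 E T) {e e' : α} (he : e ∈ emis E T)
    (he' : e' ∈ emis E T) (h : e ∈ emis E (T ∪ S)) : e' ∈ emis E (T ∪ S) := by
  obtain ⟨_, u, huU, hee⟩ := h
  exact ⟨Or.inl he'.1, u, huU, tcm_child_all h4 he he' (fun h => huU (Or.inl h)) hee⟩

lemma tcm_pset'_t (hE : EdgesIn V E) (ht : t ∉ V) (hS : S ⊆ V \ T) (h3 : Cond3 E T)
    {r : α} (hr : r ∈ recs E T) :
    {u | u ∉ insert t S ∧ ClusterEdge E T t u t} = {u | u ∉ T ∪ S ∧ E u r} := by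
  ext u
  simp only [Set.mem_setOf_eq, Set.mem_insert_iff, Set.mem_union, not_or]
  constructor
  · rintro ⟨⟨hut, huS⟩, hce⟩
    rcases (tcm_ce_to_t hE ht).1 hce with ⟨huT, _, r', hr', he⟩
    exact ⟨⟨huT, huS⟩, tcm_parent_all h3 hr' hr huT he⟩
  · rintro ⟨⟨huT, huS⟩, he⟩
    exact ⟨⟨(tcm_edge_ne hE ht he).1, huS⟩,
      (tcm_ce_to_t hE ht).2 ⟨huT, (tcm_edge_ne hE ht he).1, r, hr, he⟩⟩

lemma tcm_cset'_t (hE : EdgesIn V E) (ht : t ∉ V) (hS : S ⊆ V \ T) (h4 : Cond4 E T)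
    {e : α} (he : e ∈ emis E T) :
    {u | u ∉ insert t S ∧ ClusterEdge E T t t u} = {u | u ∉ T ∪ S ∧ E e u} := by
  ext u
  simp only [Set.mem_setOf_eq, Set.mem_insert_iff, Set.mem_union, not_or]
  constructor
  · rintro ⟨⟨hut, huS⟩, hce⟩
    rcases (tcm_ce_from_t hE ht).1 hce with ⟨huT, _, e', he', hee⟩
    exact ⟨⟨huT, huS⟩, tcm_child_all h4 he' he huT hee⟩
  · rintro ⟨⟨huT, huS⟩, hee⟩
    exact ⟨⟨(tcm_edge_ne hE ht hee).2, huS⟩,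
      (tcm_ce_from_t hE ht).2 ⟨huT, (tcm_edge_ne hE ht hee).2, e, he, hee⟩⟩

lemma tcm_recs'_t_all (hE : EdgesIn V E) (ht : t ∉ V) (hS : S ⊆ V \ T) (h3 : Cond3 E T)
    (h : t ∈ recs (ClusterEdge E T t) (insert t S)) :
    ∀ r ∈ recs E T, r ∈ recs E (T ∪ S) := by
  obtain ⟨v, hvT, hvU⟩ := (tcm_recs'_t hE ht hS).1 h
  exact fun r hr => tcm_recsU_all h3 (tcm_recsU_T hvT hvU) hr hvU

lemma tcm_emis'_t_all (hE : EdgesIn V E) (ht : t ∉ V) (hS : S ⊆ V \ T) (h4 : Cond4 E T)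
    (h : t ∈ emis (ClusterEdge E T t) (insert t S)) :
    ∀ e ∈ emis E T, e ∈ emis E (T ∪ S) := by
  obtain ⟨v, hvT, hvU⟩ := (tcm_emis'_t hE ht hS).1 h
  exact fun e he => tcm_emisU_all h4 (tcm_emisU_T hvT hvU) he hvU

lemma tcm_not_recs'_t (hE : EdgesIn V E) (ht : t ∉ V) (hS : S ⊆ V \ T)
    (h : t ∉ recs (ClusterEdge E T t) (insert t S)) :
    ∀ v ∈ T, v ∉ recs E (T ∪ S) := by
  intro v hv hvU
  exact h ((tcm_recs'_t hE ht hS).2 ⟨v, hv, hvU⟩)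

lemma tcm_not_emis'_t (hE : EdgesIn V E) (ht : t ∉ V) (hS : S ⊆ V \ T)
    (h : t ∉ emis (ClusterEdge E T t) (insert t S)) :
    ∀ v ∈ T, v ∉ emis E (T ∪ S) := by
  intro v hv hvU
  exact h ((tcm_emis'_t hE ht hS).2 ⟨v, hv, hvU⟩)

lemma tcm_cutT_cutU {u v : α} (h : CutEdge E T u v) : CutEdge E (T ∪ S) u v :=
  ⟨Or.inl h.1, Or.inl h.2.1, h.2.2.1,
    fun hr => h.2.2.2.1 (tcm_recsU_T h.2.1 hr),
    fun he => h.2.2.2.2 (tcm_emisU_T h.1 he)⟩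

end TCM3

section TCM4
variable {E : α → α → Prop} {T S : Set α}

lemma tcm_walk_fwd (hR : ∀ v ∈ T, v ∉ recs E (T ∪ S)) (hE2 : ∀ v ∈ T, v ∉ emis E (T ∪ S))
    {x e : α} (hp : Relation.ReflTransGen E x e) (hx : x ∈ T) (he : e ∈ emis E T) :
    ∃ e', e' ∈ emis E T ∧ UndirReach (CutEdge E (T ∪ S)) x e' := by
  revert hx
  induction hp using Relation.ReflTransGen.head_induction_on with
  | refl => exact fun _ => ⟨e, he, Relation.ReflTransGen.refl⟩
  | head hstep htail ih =>
    rename_i a z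
    intro ha
    by_cases hz : z ∈ T
    · obtain ⟨e', he', hpath⟩ := ih hz
      exact ⟨e', he', Relation.ReflTransGen.head
        (Or.inl ⟨Or.inl ha, Or.inl hz, hstep, hR z hz, hE2 a ha⟩) hpath⟩
    · exact ⟨a, ⟨ha, z, hz, hstep⟩, Relation.ReflTransGen.refl⟩

lemma tcm_walk_bwd (hR : ∀ v ∈ T, v ∉ recs E (T ∪ S)) (hE2 : ∀ v ∈ T, v ∉ emis E (T ∪ S))
    {r y : α} (hp : Relation.ReflTransGen E r y) (hr : r ∈ recs E T) (hy : y ∈ T) :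
    ∃ r', r' ∈ recs E T ∧ UndirReach (CutEdge E (T ∪ S)) y r' := by
  revert hy
  induction hp with
  | refl => exact fun _ => ⟨r, hr, Relation.ReflTransGen.refl⟩
  | tail htail hstep ih =>
    rename_i z y
    intro hy
    by_cases hz : z ∈ T
    · obtain ⟨r', hr', hpath⟩ := ih hz
      exact ⟨r', hr', Relation.ReflTransGen.head
        (Or.inr ⟨Or.inl hz, Or.inl hy, hstep, hR y hy, hE2 z hz⟩) hpath⟩
    · exact ⟨y, ⟨hy, z, hz, hstep⟩, Relation.ReflTransGen.refl⟩

lemma tcm_walk_emisU (hR : ∀ v ∈ T, v ∉ recs E (T ∪ S))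
    (hsub : ∀ e ∈ emis E T, e ∈ emis E (T ∪ S))
    {x e : α} (hp : Relation.ReflTransGen E x e) (hx : x ∈ T) (he : e ∈ emis E T) :
    ∃ w, w ∈ emis E (T ∪ S) ∧ UndirReach (CutEdge E (T ∪ S)) x w := by
  revert hx
  induction hp using Relation.ReflTransGen.head_induction_on with
  | refl => exact fun _ => ⟨e, hsub e he, Relation.ReflTransGen.refl⟩
  | head hstep htail ih =>
    rename_i a z
    intro ha
    by_cases haU : a ∈ emis E (T ∪ S)
    · exact ⟨a, haU, Relation.ReflTransGen.refl⟩
    · by_cases hz : z ∈ T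
      · obtain ⟨w, hw, hpath⟩ := ih hz
        exact ⟨w, hw, Relation.ReflTransGen.head
          (Or.inl ⟨Or.inl ha, Or.inl hz, hstep, hR z hz, haU⟩) hpath⟩
      · exact absurd (hsub a ⟨ha, z, hz, hstep⟩) haU

lemma tcm_walk_recsU (hE2 : ∀ v ∈ T, v ∉ emis E (T ∪ S))
    (hsub : ∀ r ∈ recs E T, r ∈ recs E (T ∪ S))
    {r y : α} (hp : Relation.ReflTransGen E r y) (hr : r ∈ recs E T) (hy : y ∈ T) :
    ∃ w, w ∈ recs E (T ∪ S) ∧ UndirReach (CutEdge E (T ∪ S)) y w := by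
  revert hy
  induction hp with
  | refl => exact fun _ => ⟨r, hsub r hr, Relation.ReflTransGen.refl⟩
  | tail htail hstep ih =>
    rename_i z y
    intro hy
    by_cases hyU : y ∈ recs E (T ∪ S)
    · exact ⟨y, hyU, Relation.ReflTransGen.refl⟩
    · by_cases hz : z ∈ T
      · obtain ⟨w, hw, hpath⟩ := ih hz
        exact ⟨w, hw, Relation.ReflTransGen.head
          (Or.inr ⟨Or.inl hz, Or.inl hy, hstep, hyU, hE2 z hz⟩) hpath⟩
      · exact absurd ⟨hy, z, hz, hstep⟩ (fun h => hyU (hsub y h))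

end TCM4

section TCM5
variable {V : Set α} {E : α → α → Prop} {T S : Set α} {t : α}

/-- condition 6 of a transit cluster -/
def Cond6 (E : α → α → Prop) (T : Set α) : Prop :=
  (emis E T).Nonempty → ∀ r ∈ recs E T, ∃ e ∈ emis E T, Relation.ReflTransGen E r e

/-- condition 7 of a transit cluster -/
def Cond7 (E : α → α → Prop) (T : Set α) : Prop :=
  (recs E T).Nonempty → ∀ e ∈ emis E T, ∃ r ∈ recs E T, Relation.ReflTransGen E r e

lemma tcm_bridge_in (hE : EdgesIn V E) (ht : t ∉ V) (hS : S ⊆ V \ T) (h3 : Cond3 E T)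
    {b : α} (h : CutEdge (ClusterEdge E T t) (insert t S) b t) :
    b ∈ S ∧ b ∉ emis E (T ∪ S) ∧ (∀ v ∈ T, v ∉ recs E (T ∪ S)) ∧
      (recs E T).Nonempty ∧ ∀ r ∈ recs E T, CutEdge E (T ∪ S) b r := by
  obtain ⟨hbT', -, hce, htr, hbe⟩ := h
  obtain ⟨hbT, hbt, r₀, hr₀, he₀⟩ := (tcm_ce_to_t hE ht).1 hce
  have hbS : b ∈ S := (Set.mem_insert_iff.1 hbT').resolve_left hbt
  have hbeU : b ∉ emis E (T ∪ S) := fun h => hbe ((tcm_emis'_S hE ht hS hbS).2 h)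
  have hR := tcm_not_recs'_t hE ht hS htr
  exact ⟨hbS, hbeU, hR, ⟨r₀, hr₀⟩, fun r hr =>
    ⟨Or.inr hbS, Or.inl hr.1, tcm_parent_all h3 hr₀ hr hbT he₀, hR r hr.1, hbeU⟩⟩

lemma tcm_bridge_out (hE : EdgesIn V E) (ht : t ∉ V) (hS : S ⊆ V \ T) (h4 : Cond4 E T)
    {c : α} (h : CutEdge (ClusterEdge E T t) (insert t S) t c) :
    c ∈ S ∧ c ∉ recs E (T ∪ S) ∧ (∀ v ∈ T, v ∉ emis E (T ∪ S)) ∧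
      (emis E T).Nonempty ∧ ∀ e ∈ emis E T, CutEdge E (T ∪ S) e c := by
  obtain ⟨-, hcT', hce, hcr, hte⟩ := h
  obtain ⟨hcT, hct, e₀, he₀, hee₀⟩ := (tcm_ce_from_t hE ht).1 hce
  have hcS : c ∈ S := (Set.mem_insert_iff.1 hcT').resolve_left hct
  have hcrU : c ∉ recs E (T ∪ S) := fun h => hcr ((tcm_recs'_S hE ht hS hcS).2 h)
  have hE2 := tcm_not_emis'_t hE ht hS hte
  exact ⟨hcS, hcrU, hE2, ⟨e₀, he₀⟩, fun e he =>
    ⟨Or.inl he.1, Or.inr hcS, tcm_child_all h4 he₀ he hcT hee₀, hcrU, hE2 e he.1⟩⟩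

lemma tcm_bridge (hE : EdgesIn V E) (ht : t ∉ V) (hS : S ⊆ V \ T)
    (h3 : Cond3 E T) (h4 : Cond4 E T) (h6 : Cond6 E T) (h7 : Cond7 E T)
    {b c : α}
    (hb : CutEdge (ClusterEdge E T t) (insert t S) b t ∨
          CutEdge (ClusterEdge E T t) (insert t S) t b)
    (hc : CutEdge (ClusterEdge E T t) (insert t S) c t ∨
          CutEdge (ClusterEdge E T t) (insert t S) t c) :
    UndirReach (CutEdge E (T ∪ S)) b c := by
  rcases hb with hb | hb <;> rcases hc with hc | hc
  · -- in / in
    obtain ⟨-, -, -, ⟨r₀, hr₀⟩, hcut⟩ := tcm_bridge_in hE ht hS h3 hb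
    obtain ⟨-, -, -, -, hcut'⟩ := tcm_bridge_in hE ht hS h3 hc
    exact Relation.ReflTransGen.head (Or.inl (hcut r₀ hr₀))
      (Relation.ReflTransGen.single (Or.inr (hcut' r₀ hr₀)))
  · -- in / out
    obtain ⟨-, -, hR, ⟨r₀, hr₀⟩, hcut⟩ := tcm_bridge_in hE ht hS h3 hb
    obtain ⟨-, -, hE2, hemne, hcut'⟩ := tcm_bridge_out hE ht hS h4 hc
    obtain ⟨e₂, he₂, hpath⟩ := h6 hemne r₀ hr₀
    obtain ⟨e', he', hwalk⟩ := tcm_walk_fwd hR hE2 hpath hr₀.1 ⟨he₂.1, he₂.2⟩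
    exact Relation.ReflTransGen.head (Or.inl (hcut r₀ hr₀))
      (hwalk.trans (Relation.ReflTransGen.single (Or.inl (hcut' e' he'))))
  · -- out / in
    obtain ⟨-, -, hE2, ⟨e₀, he₀⟩, hcut⟩ := tcm_bridge_out hE ht hS h4 hb
    obtain ⟨-, -, hR, hrne, hcut'⟩ := tcm_bridge_in hE ht hS h3 hc
    obtain ⟨r₂, hr₂, hpath⟩ := h7 hrne e₀ he₀
    obtain ⟨r', hr', hwalk⟩ := tcm_walk_bwd hR hE2 hpath hr₂ he₀.1
    exact Relation.ReflTransGen.head (Or.inr (hcut e₀ he₀))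
      (hwalk.trans (Relation.ReflTransGen.single (Or.inr (hcut' r' hr'))))
  · -- out / out
    obtain ⟨-, -, -, ⟨e₀, he₀⟩, hcut⟩ := tcm_bridge_out hE ht hS h4 hb
    obtain ⟨-, -, -, -, hcut'⟩ := tcm_bridge_out hE ht hS h4 hc
    exact Relation.ReflTransGen.head (Or.inr (hcut e₀ he₀))
      (Relation.ReflTransGen.single (Or.inl (hcut' e₀ he₀)))

lemma tcm_endpoint (hE : EdgesIn V E) (ht : t ∉ V) (hS : S ⊆ V \ T)
    (h3 : Cond3 E T) (h4 : Cond4 E T) (h6 : Cond6 E T) (h7 : Cond7 E T)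
    (htre : t ∈ recs (ClusterEdge E T t) (insert t S) ∨
            t ∈ emis (ClusterEdge E T t) (insert t S))
    {b : α}
    (hb : CutEdge (ClusterEdge E T t) (insert t S) b t ∨
          CutEdge (ClusterEdge E T t) (insert t S) t b) :
    ∃ w, (w ∈ recs E (T ∪ S) ∨ w ∈ emis E (T ∪ S)) ∧
      UndirReach (CutEdge E (T ∪ S)) b w := by
  rcases hb with hb | hb
  · obtain ⟨-, -, hR, ⟨r₀, hr₀⟩, hcut⟩ := tcm_bridge_in hE ht hS h3 hb
    have hte : t ∈ emis (ClusterEdge E T t) (insert t S) := htre.resolve_left hb.2.2.2.1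
    have hsub := tcm_emis'_t_all hE ht hS h4 hte
    obtain ⟨v, hvT, hvU⟩ := (tcm_emis'_t hE ht hS).1 hte
    obtain ⟨e₂, he₂, hpath⟩ := h6 ⟨v, tcm_emisU_T hvT hvU⟩ r₀ hr₀
    obtain ⟨w, hw, hwalk⟩ := tcm_walk_emisU hR hsub hpath hr₀.1 he₂
    exact ⟨w, Or.inr hw, Relation.ReflTransGen.head (Or.inl (hcut r₀ hr₀)) hwalk⟩
  · obtain ⟨-, -, hE2, ⟨e₀, he₀⟩, hcut⟩ := tcm_bridge_out hE ht hS h4 hb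
    have htr : t ∈ recs (ClusterEdge E T t) (insert t S) := htre.resolve_right hb.2.2.2.2
    have hsub := tcm_recs'_t_all hE ht hS h3 htr
    obtain ⟨v, hvT, hvU⟩ := (tcm_recs'_t hE ht hS).1 htr
    obtain ⟨r₂, hr₂, hpath⟩ := h7 ⟨v, tcm_recsU_T hvT hvU⟩ e₀ he₀
    obtain ⟨w, hw, hwalk⟩ := tcm_walk_recsU hE2 hsub hpath hr₂ he₀.1
    exact ⟨w, Or.inl hw, Relation.ReflTransGen.head (Or.inr (hcut e₀ he₀)) hwalk⟩

end TCM5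

section TCM6
variable {V : Set α} {E : α → α → Prop} {T S : Set α} {t : α}

lemma tcm_master (hE : EdgesIn V E) (ht : t ∉ V) (hS : S ⊆ V \ T)
    (h3 : Cond3 E T) (h4 : Cond4 E T) (h6 : Cond6 E T) (h7 : Cond7 E T)
    {u w' : α}
    (hp : UndirReach (CutEdge (ClusterEdge E T t) (insert t S)) u w')
    (hw' : w' ∈ recs (ClusterEdge E T t) (insert t S) ∨
           w' ∈ emis (ClusterEdge E T t) (insert t S)) :
    (u ∈ S → ∃ w, (w ∈ recs E (T ∪ S) ∨ w ∈ emis E (T ∪ S)) ∧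
        UndirReach (CutEdge E (T ∪ S)) u w) ∧
    (u = t → ∀ b, (CutEdge (ClusterEdge E T t) (insert t S) b t ∨
                   CutEdge (ClusterEdge E T t) (insert t S) t b) →
        ∃ w, (w ∈ recs E (T ∪ S) ∨ w ∈ emis E (T ∪ S)) ∧
          UndirReach (CutEdge E (T ∪ S)) b w) := by
  induction hp using Relation.ReflTransGen.head_induction_on with
  | refl =>
    constructor
    · intro huS
      refine ⟨w', ?_, Relation.ReflTransGen.refl⟩
      rcases hw' with h | h
      · exact Or.inl ((tcm_recs'_S hE ht hS huS).1 h)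
      · exact Or.inr ((tcm_emis'_S hE ht hS huS).1 h)
    · intro hut b hb
      rw [hut] at hw'
      exact tcm_endpoint hE ht hS h3 h4 h6 h7 hw' hb
  | head hstep htail ih =>
    rename_i a z
    have hzT' : z ∈ insert t S := by
      rcases hstep with h | h
      · exact h.2.1
      · exact h.1
    constructor
    · intro haS
      have hat : a ≠ t := fun h => tcm_tS ht hS (h ▸ haS)
      by_cases hzt : z = t
      · rw [hzt] at hstep
        exact (ih.2 hzt) a hstep
      · have hzS : z ∈ S := (Set.mem_insert_iff.1 hzT').resolve_left hzt
        obtain ⟨w, hw, hpath⟩ := ih.1 hzS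
        rcases hstep with h | h
        · obtain ⟨-, -, hce, hzr, hae⟩ := h
          have he := (tcm_ce_nt hat hzt).1 hce
          refine ⟨w, hw, Relation.ReflTransGen.head (Or.inl
            ⟨Or.inr haS, Or.inr hzS, he.2.2,
             fun hr => hzr ((tcm_recs'_S hE ht hS hzS).2 hr),
             fun hee => hae ((tcm_emis'_S hE ht hS haS).2 hee)⟩) hpath⟩
        · obtain ⟨-, -, hce, har, hze⟩ := h
          have he := (tcm_ce_nt hzt hat).1 hce
          refine ⟨w, hw, Relation.ReflTransGen.head (Or.inr
            ⟨Or.inr hzS, Or.inr haS, he.2.2,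
             fun hr => har ((tcm_recs'_S hE ht hS haS).2 hr),
             fun hee => hze ((tcm_emis'_S hE ht hS hzS).2 hee)⟩) hpath⟩
    · intro hat b hb
      rw [hat] at hstep
      by_cases hzt : z = t
      · rw [hzt] at hstep
        rcases hstep with h | h <;> exact absurd h.2.2.1 (tcm_ce_tt hE ht)
      · have hzS : z ∈ S := (Set.mem_insert_iff.1 hzT').resolve_left hzt
        have hbz : UndirReach (CutEdge E (T ∪ S)) b z :=
          tcm_bridge hE ht hS h3 h4 h6 h7 hb (Or.symm hstep)
        obtain ⟨w, hw, hpath⟩ := ih.1 hzS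
        exact ⟨w, hw, hbz.trans hpath⟩

end TCM6

section TCM7
variable {V : Set α} {E : α → α → Prop} {T S : Set α} {t : α}

lemma tcm_LD (hE : EdgesIn V E) (ht : t ∉ V) (hS : S ⊆ V \ T)
    (h4 : Cond4 E T) (h6 : Cond6 E T)
    {x' y' : α} (hp : Relation.ReflTransGen (ClusterEdge E T t) x' y')
    (hy' : y' ∈ emis (ClusterEdge E T t) (insert t S)) :
    ∀ x, ((x' ≠ t ∧ x = x') ∨ (x' = t ∧ x ∈ recs E T)) →
      ∃ e, e ∈ emis E (T ∪ S) ∧ Relation.ReflTransGen E x e := by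
  induction hp using Relation.ReflTransGen.head_induction_on with
  | refl =>
    rintro x (⟨hne, rfl⟩ | ⟨rfl, hxr⟩)
    · have hyS : x ∈ S := (Set.mem_insert_iff.1 hy'.1).resolve_left hne
      exact ⟨x, (tcm_emis'_S hE ht hS hyS).1 hy', Relation.ReflTransGen.refl⟩
    · obtain ⟨v, hvT, hvU⟩ := (tcm_emis'_t hE ht hS).1 hy'
      have hvE : v ∈ emis E T := tcm_emisU_T hvT hvU
      obtain ⟨e₂, he₂, hpath⟩ := h6 ⟨v, hvE⟩ x hxr
      exact ⟨e₂, tcm_emisU_all h4 hvE he₂ hvU, hpath⟩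
  | head hstep htail ih =>
    rename_i x' z'
    rintro x (⟨hx't, rfl⟩ | ⟨hx't, hxr⟩)
    · by_cases hz't : z' = t
      · rw [hz't] at hstep
        obtain ⟨-, -, r₁, hr₁, her⟩ := (tcm_ce_to_t hE ht).1 hstep
        obtain ⟨e, heU, hpath⟩ := ih r₁ (Or.inr ⟨hz't, hr₁⟩)
        exact ⟨e, heU, Relation.ReflTransGen.head her hpath⟩
      · obtain ⟨-, -, he⟩ := (tcm_ce_nt hx't hz't).1 hstep
        obtain ⟨e, heU, hpath⟩ := ih z' (Or.inl ⟨hz't, rfl⟩)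
        exact ⟨e, heU, Relation.ReflTransGen.head he hpath⟩
    · rw [hx't] at hstep
      by_cases hz't : z' = t
      · rw [hz't] at hstep
        exact absurd hstep (tcm_ce_tt hE ht)
      · obtain ⟨hz'T, -, e₁, he₁, hez⟩ := (tcm_ce_from_t hE ht).1 hstep
        obtain ⟨e₂, he₂, hpathx⟩ := h6 ⟨e₁, he₁⟩ x hxr
        obtain ⟨e, heU, hpath⟩ := ih z' (Or.inl ⟨hz't, rfl⟩)
        exact ⟨e, heU, hpathx.trans (Relation.ReflTransGen.head
          (tcm_child_all h4 he₁ he₂ hz'T hez) hpath)⟩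

lemma tcm_LD' (hE : EdgesIn V E) (ht : t ∉ V) (hS : S ⊆ V \ T)
    (h3 : Cond3 E T) (h7 : Cond7 E T)
    {x' y' : α} (hp : Relation.ReflTransGen (ClusterEdge E T t) x' y')
    (hx' : x' ∈ recs (ClusterEdge E T t) (insert t S)) :
    ∀ y, ((y' ≠ t ∧ y = y') ∨ (y' = t ∧ y ∈ emis E T)) →
      ∃ r, r ∈ recs E (T ∪ S) ∧ Relation.ReflTransGen E r y := by
  induction hp with
  | refl =>
    rintro y (⟨hne, rfl⟩ | ⟨rfl, hye⟩)
    · have hxS : y ∈ S := (Set.mem_insert_iff.1 hx'.1).resolve_left hne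
      exact ⟨y, (tcm_recs'_S hE ht hS hxS).1 hx', Relation.ReflTransGen.refl⟩
    · obtain ⟨v, hvT, hvU⟩ := (tcm_recs'_t hE ht hS).1 hx'
      have hvR : v ∈ recs E T := tcm_recsU_T hvT hvU
      obtain ⟨r₂, hr₂, hpath⟩ := h7 ⟨v, hvR⟩ y hye
      exact ⟨r₂, tcm_recsU_all h3 hvR hr₂ hvU, hpath⟩
  | tail htail hstep ih =>
    rename_i z' y'
    rintro y (⟨hy't, rfl⟩ | ⟨hy't, hye⟩)
    · by_cases hz't : z' = t
      · rw [hz't] at hstep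
        obtain ⟨-, -, e₁, he₁, hey⟩ := (tcm_ce_from_t hE ht).1 hstep
        obtain ⟨r, hrU, hpath⟩ := ih e₁ (Or.inr ⟨hz't, he₁⟩)
        exact ⟨r, hrU, hpath.tail hey⟩
      · obtain ⟨-, -, he⟩ := (tcm_ce_nt hz't hy't).1 hstep
        obtain ⟨r, hrU, hpath⟩ := ih z' (Or.inl ⟨hz't, rfl⟩)
        exact ⟨r, hrU, hpath.tail he⟩
    · rw [hy't] at hstep
      by_cases hz't : z' = t
      · rw [hz't] at hstep
        exact absurd hstep (tcm_ce_tt hE ht)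
      · obtain ⟨hz'T, -, r₁, hr₁, hzr⟩ := (tcm_ce_to_t hE ht).1 hstep
        obtain ⟨r₂, hr₂, hpathy⟩ := h7 ⟨r₁, hr₁⟩ y hye
        obtain ⟨r, hrU, hpath⟩ := ih z' (Or.inl ⟨hz't, rfl⟩)
        exact ⟨r, hrU, (hpath.tail (tcm_parent_all h3 hr₁ hr₂ hz'T hzr)).trans hpathy⟩

end TCM7

open Classical in
noncomputable def tcmProj (T : Set α) (t x : α) : α := if x ∈ T then t else x

section TCM8
variable {V : Set α} {E : α → α → Prop} {T S : Set α} {t : α}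

lemma tcmProj_mem {x : α} (hx : x ∈ T) : tcmProj T t x = t := by
  simp [tcmProj, hx]

lemma tcmProj_not {x : α} (hx : x ∉ T) : tcmProj T t x = x := by
  simp [tcmProj, hx]

lemma tcm_map_dir (hE : EdgesIn V E) (ht : t ∉ V)
    {x y : α} (hp : Relation.ReflTransGen E x y) :
    Relation.ReflTransGen (ClusterEdge E T t) (tcmProj T t x) (tcmProj T t y) := by
  induction hp with
  | refl => exact Relation.ReflTransGen.refl
  | tail htail hstep ih =>
    rename_i z y
    by_cases hz : z ∈ T <;> by_cases hy : y ∈ T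
    · rw [show tcmProj T t y = tcmProj T t z from by rw [tcmProj_mem hz, tcmProj_mem hy]]
      exact ih
    · refine ih.tail ?_
      rw [tcmProj_mem hz, tcmProj_not hy]
      exact (tcm_ce_from_t hE ht).2
        ⟨hy, (tcm_edge_ne hE ht hstep).2, z, ⟨hz, y, hy, hstep⟩, hstep⟩
    · refine ih.tail ?_
      rw [tcmProj_not hz, tcmProj_mem hy]
      exact (tcm_ce_to_t hE ht).2
        ⟨hz, (tcm_edge_ne hE ht hstep).1, y, ⟨hy, z, hz, hstep⟩, hstep⟩
    · refine ih.tail ?_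
      rw [tcmProj_not hz, tcmProj_not hy]
      exact Or.inl ⟨hz, hy, hstep⟩

lemma tcm_map_cut (hE : EdgesIn V E) (ht : t ∉ V) (hS : S ⊆ V \ T)
    (h3 : Cond3 E T) (h4 : Cond4 E T)
    {u v : α} (h : CutEdge E (T ∪ S) u v) :
    tcmProj T t u = tcmProj T t v ∨
    CutEdge (ClusterEdge E T t) (insert t S) (tcmProj T t u) (tcmProj T t v) := by
  obtain ⟨huU, hvU, he, hvr, hue⟩ := h
  by_cases hu : u ∈ T <;> by_cases hv : v ∈ T
  · exact Or.inl (by rw [tcmProj_mem hu, tcmProj_mem hv])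
  · right
    have hvS : v ∈ S := hvU.resolve_left hv
    have huE : u ∈ emis E T := ⟨hu, v, hv, he⟩
    have hte : t ∉ emis (ClusterEdge E T t) (insert t S) := fun hmem =>
      hue (tcm_emis'_t_all hE ht hS h4 hmem u huE)
    rw [tcmProj_mem hu, tcmProj_not hv]
    exact ⟨Set.mem_insert _ _, Set.mem_insert_iff.2 (Or.inr hvS),
      (tcm_ce_from_t hE ht).2 ⟨hv, fun hvt => tcm_tS ht hS (hvt ▸ hvS), u, huE, he⟩,
      fun hr => hvr ((tcm_recs'_S hE ht hS hvS).1 hr), hte⟩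
  · right
    have huS : u ∈ S := huU.resolve_left hu
    have hvR : v ∈ recs E T := ⟨hv, u, hu, he⟩
    have htr : t ∉ recs (ClusterEdge E T t) (insert t S) := fun hmem =>
      hvr (tcm_recs'_t_all hE ht hS h3 hmem v hvR)
    rw [tcmProj_not hu, tcmProj_mem hv]
    exact ⟨Set.mem_insert_iff.2 (Or.inr huS), Set.mem_insert _ _,
      (tcm_ce_to_t hE ht).2 ⟨hu, fun hut => tcm_tS ht hS (hut ▸ huS), v, hvR, he⟩,
      htr, fun hee => hue ((tcm_emis'_S hE ht hS huS).1 hee)⟩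
  · right
    have huS : u ∈ S := huU.resolve_left hu
    have hvS : v ∈ S := hvU.resolve_left hv
    rw [tcmProj_not hu, tcmProj_not hv]
    exact ⟨Set.mem_insert_iff.2 (Or.inr huS), Set.mem_insert_iff.2 (Or.inr hvS),
      Or.inl ⟨hu, hv, he⟩,
      fun hr => hvr ((tcm_recs'_S hE ht hS hvS).1 hr),
      fun hee => hue ((tcm_emis'_S hE ht hS huS).1 hee)⟩

lemma tcm_map_undir (hE : EdgesIn V E) (ht : t ∉ V) (hS : S ⊆ V \ T)
    (h3 : Cond3 E T) (h4 : Cond4 E T)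
    {x y : α} (h : UndirReach (CutEdge E (T ∪ S)) x y) :
    UndirReach (CutEdge (ClusterEdge E T t) (insert t S)) (tcmProj T t x) (tcmProj T t y) := by
  induction h with
  | refl => exact Relation.ReflTransGen.refl
  | tail htail hstep ih =>
    rename_i z y
    rcases hstep with h | h
    · rcases tcm_map_cut hE ht hS h3 h4 h with heq | hcut
      · rwa [← heq]
      · exact ih.tail (Or.inl hcut)
    · rcases tcm_map_cut hE ht hS h3 h4 h with heq | hcut
      · rwa [heq]
      · exact ih.tail (Or.inr hcut)

end TCM8

section TCM9
variable {V : Set α} {E : α → α → Prop} {T S : Set α} {t : α}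

lemma tcm_port (hE : EdgesIn V E) (ht : t ∉ V) (hS : S ⊆ V \ T)
    (h3 : Cond3 E T) (h4 : Cond4 E T) (h6 : Cond6 E T) (h7 : Cond7 E T)
    {w : α} (hw : w ∈ recs E T ∨ w ∈ emis E T)
    (ht5 : ∃ w'', (w'' ∈ recs (ClusterEdge E T t) (insert t S) ∨
                   w'' ∈ emis (ClusterEdge E T t) (insert t S)) ∧
        UndirReach (CutEdge (ClusterEdge E T t) (insert t S)) t w'') :
    ∃ w₀, (w₀ ∈ recs E (T ∪ S) ∨ w₀ ∈ emis E (T ∪ S)) ∧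
      UndirReach (CutEdge E (T ∪ S)) w w₀ := by
  by_cases hq : w ∈ recs E (T ∪ S)
  · exact ⟨w, Or.inl hq, Relation.ReflTransGen.refl⟩
  by_cases hq2 : w ∈ emis E (T ∪ S)
  · exact ⟨w, Or.inr hq2, Relation.ReflTransGen.refl⟩
  obtain ⟨w'', hw''re, hp'⟩ := ht5
  rcases Relation.ReflTransGen.cases_head hp' with heq | ⟨z, hstep, htail⟩
  · rw [← heq] at hw''re
    rcases hw''re with htr | hte
    · have hsub := tcm_recs'_t_all hE ht hS h3 htr
      rcases hw with hwr | hwe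
      · exact absurd (hsub w hwr) hq
      · have hE2 : ∀ v ∈ T, v ∉ emis E (T ∪ S) := fun v hv hvU =>
          hq2 (tcm_emisU_all h4 (tcm_emisU_T hv hvU) hwe hvU)
        obtain ⟨v, hvT, hvU⟩ := (tcm_recs'_t hE ht hS).1 htr
        obtain ⟨r₂, hr₂, hpath⟩ := h7 ⟨v, tcm_recsU_T hvT hvU⟩ w hwe
        obtain ⟨w₀, hw₀, hwalk⟩ := tcm_walk_recsU hE2 hsub hpath hr₂ hwe.1
        exact ⟨w₀, Or.inl hw₀, hwalk⟩
    · have hsub := tcm_emis'_t_all hE ht hS h4 hte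
      rcases hw with hwr | hwe
      · have hR : ∀ v ∈ T, v ∉ recs E (T ∪ S) := fun v hv hvU =>
          hq (tcm_recsU_all h3 (tcm_recsU_T hv hvU) hwr hvU)
        obtain ⟨v, hvT, hvU⟩ := (tcm_emis'_t hE ht hS).1 hte
        obtain ⟨e₂, he₂, hpath⟩ := h6 ⟨v, tcm_emisU_T hvT hvU⟩ w hwr
        obtain ⟨w₀, hw₀, hwalk⟩ := tcm_walk_emisU hR hsub hpath hwr.1 he₂
        exact ⟨w₀, Or.inr hw₀, hwalk⟩
      · exact absurd (hsub w hwe) hq2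
  · have hzT' : z ∈ insert t S := by
      rcases hstep with h | h
      · exact h.2.1
      · exact h.1
    have hzt : z ≠ t := by
      rintro rfl
      rcases hstep with h | h <;> exact tcm_ce_tt hE ht h.2.2.1
    have hzS : z ∈ S := (Set.mem_insert_iff.1 hzT').resolve_left hzt
    obtain ⟨w₀, hw₀, hzw₀⟩ :=
      (tcm_master hE ht hS h3 h4 h6 h7 htail hw''re).1 hzS
    have hwz : UndirReach (CutEdge E (T ∪ S)) w z := by
      rcases hstep with hout | hin
      · obtain ⟨-, -, hE2, hemne, hcut⟩ := tcm_bridge_out hE ht hS h4 hout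
        rcases hw with hwr | hwe
        · have hR : ∀ v ∈ T, v ∉ recs E (T ∪ S) := fun v hv hvU =>
            hq (tcm_recsU_all h3 (tcm_recsU_T hv hvU) hwr hvU)
          obtain ⟨e₂, he₂, hpath⟩ := h6 hemne w hwr
          obtain ⟨e', he', hwalk⟩ := tcm_walk_fwd hR hE2 hpath hwr.1 he₂
          exact hwalk.trans (Relation.ReflTransGen.single (Or.inl (hcut e' he')))
        · exact Relation.ReflTransGen.single (Or.inl (hcut w hwe))
      · obtain ⟨-, -, hR, hrne, hcut⟩ := tcm_bridge_in hE ht hS h3 hin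
        rcases hw with hwr | hwe
        · exact Relation.ReflTransGen.single (Or.inr (hcut w hwr))
        · have hE2 : ∀ v ∈ T, v ∉ emis E (T ∪ S) := fun v hv hvU =>
            hq2 (tcm_emisU_all h4 (tcm_emisU_T hv hvU) hwe hvU)
          obtain ⟨r₂, hr₂, hpath⟩ := h7 hrne w hwe
          obtain ⟨r', hr', hwalk⟩ := tcm_walk_bwd hR hE2 hpath hr₂ hwe.1
          exact hwalk.trans (Relation.ReflTransGen.single (Or.inr (hcut r' hr')))
    exact ⟨w₀, hw₀, hwz.trans hzw₀⟩

end TCM9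

/-- modularity of transit clusters. -/
theorem transit_cluster_modularity
    (V : Set α) (E : α → α → Prop) (T S : Set α) (t : α)
    (hdag : IsDAG V E)
    (ht : t ∉ V)
    (hT : IsTransitCluster V E T)
    (hS : S ⊆ V \ T) :
    IsTransitCluster (ClusterVerts V T t) (ClusterEdge E T t) (insert t S) ↔
      IsTransitCluster V E (T ∪ S) := by
  obtain ⟨hVfin, hE, hacy⟩ := hdag
  obtain ⟨hTne, hTV, h3, h4, h5, h6, h7⟩ := hT
  have h3c : Cond3 E T := h3
  have h4c : Cond4 E T := h4
  have h6c : Cond6 E T := h6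
  have h7c : Cond7 E T := h7
  have hTsubV : T ⊆ V := hTV.subset
  constructor
  · rintro ⟨hT'ne, hT'V, h3', h4', h5', h6', h7'⟩
    refine ⟨?_, ?_, ?_, ?_, ?_, ?_, ?_⟩
    · obtain ⟨x₀, hx₀⟩ := hTne
      exact ⟨x₀, Or.inl hx₀⟩
    · have hsub : T ∪ S ⊆ V := Set.union_subset hTsubV (fun s hs => (hS hs).1)
      refine (Set.ssubset_iff_of_subset hsub).2 ?_
      obtain ⟨v', hv'CV, hv'T'⟩ := Set.exists_of_ssubset hT'V
      have hv't : v' ≠ t := fun h => hv'T' (h ▸ Set.mem_insert _ _)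
      have hv'VT : v' ∈ V \ T := by
        rcases hv'CV with h | h
        · exact h
        · exact absurd h hv't
      have hv'S : v' ∉ S := fun h => hv'T' (Set.mem_insert_iff.2 (Or.inr h))
      exact ⟨v', hv'VT.1, fun h => h.elim hv'VT.2 hv'S⟩
    · -- condition 3 for T ∪ S
      have key : ∀ r ∈ recs E (T ∪ S),
          ∃ p, p ∈ recs (ClusterEdge E T t) (insert t S) ∧
            {u | u ∉ insert t S ∧ ClusterEdge E T t u p} = {u | u ∉ T ∪ S ∧ E u r} := by
        intro r hr
        rcases hr.1 with hrT | hrS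
        · exact ⟨t, (tcm_recs'_t hE ht hS).2 ⟨r, hrT, hr⟩,
            tcm_pset'_t hE ht hS h3c (tcm_recsU_T hrT hr)⟩
        · exact ⟨r, (tcm_recs'_S hE ht hS hrS).2 hr, tcm_pset'_S hE ht hS hrS⟩
      intro r₁ hr₁ r₂ hr₂
      obtain ⟨p₁, hp₁, e₁⟩ := key r₁ hr₁
      obtain ⟨p₂, hp₂, e₂⟩ := key r₂ hr₂
      rw [← e₁, ← e₂]
      exact h3' p₁ hp₁ p₂ hp₂
    · -- condition 4 for T ∪ S
      have key : ∀ e ∈ emis E (T ∪ S),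
          ∃ p, p ∈ emis (ClusterEdge E T t) (insert t S) ∧
            {u | u ∉ insert t S ∧ ClusterEdge E T t p u} = {u | u ∉ T ∪ S ∧ E e u} := by
        intro e he
        rcases he.1 with heT | heS
        · exact ⟨t, (tcm_emis'_t hE ht hS).2 ⟨e, heT, he⟩,
            tcm_cset'_t hE ht hS h4c (tcm_emisU_T heT he)⟩
        · exact ⟨e, (tcm_emis'_S hE ht hS heS).2 he, tcm_cset'_S hE ht hS heS⟩
      intro e₁ he₁ e₂ he₂
      obtain ⟨p₁, hp₁, q₁⟩ := key e₁ he₁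
      obtain ⟨p₂, hp₂, q₂⟩ := key e₂ he₂
      rw [← q₁, ← q₂]
      exact h4' p₁ hp₁ p₂ hp₂
    · -- condition 5 for T ∪ S
      intro x hx
      rcases hx with hxT | hxS
      · obtain ⟨w, hwre, hpathT⟩ := h5 x hxT
        have hpathU : UndirReach (CutEdge E (T ∪ S)) x w :=
          Relation.ReflTransGen.mono
            (fun a b (h : CutEdge E T a b ∨ CutEdge E T b a) => h.imp tcm_cutT_cutU tcm_cutT_cutU) _ _ hpathT
        obtain ⟨w₀, hw₀, hww₀⟩ := tcm_port hE ht hS h3c h4c h6c h7c hwre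
          (h5' t (Set.mem_insert _ _))
        exact ⟨w₀, hw₀, hpathU.trans hww₀⟩
      · obtain ⟨w', hw', hpath⟩ := h5' x (Set.mem_insert_iff.2 (Or.inr hxS))
        exact (tcm_master hE ht hS h3c h4c h6c h7c hpath hw').1 hxS
    · -- condition 6 for T ∪ S
      rintro ⟨e₀, he₀⟩ r hr
      have hem' : (emis (ClusterEdge E T t) (insert t S)).Nonempty := by
        rcases he₀.1 with h | h
        · exact ⟨t, (tcm_emis'_t hE ht hS).2 ⟨e₀, h, he₀⟩⟩
        · exact ⟨e₀, (tcm_emis'_S hE ht hS h).2 he₀⟩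
      rcases hr.1 with hrT | hrS
      · obtain ⟨e', he', hpath⟩ := h6' hem' t
          ((tcm_recs'_t hE ht hS).2 ⟨r, hrT, hr⟩)
        obtain ⟨e, heU, hp⟩ := tcm_LD hE ht hS h4c h6c hpath he' r
          (Or.inr ⟨rfl, tcm_recsU_T hrT hr⟩)
        exact ⟨e, heU, hp⟩
      · obtain ⟨e', he', hpath⟩ := h6' hem' r ((tcm_recs'_S hE ht hS hrS).2 hr)
        obtain ⟨e, heU, hp⟩ := tcm_LD hE ht hS h4c h6c hpath he' r
          (Or.inl ⟨fun h => tcm_tS ht hS (h ▸ hrS), rfl⟩)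
        exact ⟨e, heU, hp⟩
    · -- condition 7 for T ∪ S
      rintro ⟨r₀, hr₀⟩ e he
      have hrn' : (recs (ClusterEdge E T t) (insert t S)).Nonempty := by
        rcases hr₀.1 with h | h
        · exact ⟨t, (tcm_recs'_t hE ht hS).2 ⟨r₀, h, hr₀⟩⟩
        · exact ⟨r₀, (tcm_recs'_S hE ht hS h).2 hr₀⟩
      rcases he.1 with heT | heS
      · obtain ⟨r', hr', hpath⟩ := h7' hrn' t
          ((tcm_emis'_t hE ht hS).2 ⟨e, heT, he⟩)
        obtain ⟨r, hrU, hp⟩ := tcm_LD' hE ht hS h3c h7c hpath hr' e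
          (Or.inr ⟨rfl, tcm_emisU_T heT he⟩)
        exact ⟨r, hrU, hp⟩
      · obtain ⟨r', hr', hpath⟩ := h7' hrn' e ((tcm_emis'_S hE ht hS heS).2 he)
        obtain ⟨r, hrU, hp⟩ := tcm_LD' hE ht hS h3c h7c hpath hr' e
          (Or.inl ⟨fun h => tcm_tS ht hS (h ▸ heS), rfl⟩)
        exact ⟨r, hrU, hp⟩
  · rintro ⟨hUne, hUV, hU3, hU4, hU5, hU6, hU7⟩
    have tgtr : ∀ w, w ∈ recs E (T ∪ S) →
        tcmProj T t w ∈ recs (ClusterEdge E T t) (insert t S) := by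
      intro w hw
      rcases hw.1 with hT1 | hS1
      · rw [tcmProj_mem hT1]
        exact (tcm_recs'_t hE ht hS).2 ⟨w, hT1, hw⟩
      · rw [tcmProj_not (fun h => (hS hS1).2 h)]
        exact (tcm_recs'_S hE ht hS hS1).2 hw
    have tgte : ∀ w, w ∈ emis E (T ∪ S) →
        tcmProj T t w ∈ emis (ClusterEdge E T t) (insert t S) := by
      intro w hw
      rcases hw.1 with hT1 | hS1
      · rw [tcmProj_mem hT1]
        exact (tcm_emis'_t hE ht hS).2 ⟨w, hT1, hw⟩
      · rw [tcmProj_not (fun h => (hS hS1).2 h)]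
        exact (tcm_emis'_S hE ht hS hS1).2 hw
    refine ⟨⟨t, Set.mem_insert _ _⟩, ?_, ?_, ?_, ?_, ?_, ?_⟩
    · have hsub : insert t S ⊆ ClusterVerts V T t := by
        intro x hx
        rcases Set.mem_insert_iff.1 hx with rfl | hxS
        · exact Or.inr rfl
        · exact Or.inl (hS hxS)
      refine (Set.ssubset_iff_of_subset hsub).2 ?_
      obtain ⟨v', hv'V, hv'U⟩ := Set.exists_of_ssubset hUV
      have hv't : v' ≠ t := fun h => ht (h ▸ hv'V)
      refine ⟨v', Or.inl ⟨hv'V, fun h => hv'U (Or.inl h)⟩, ?_⟩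
      rintro (h | h)
      · exact hv't h
      · exact hv'U (Or.inr h)
    · -- condition 3 for insert t S
      have key : ∀ p ∈ recs (ClusterEdge E T t) (insert t S),
          ∃ r, r ∈ recs E (T ∪ S) ∧
            {u | u ∉ insert t S ∧ ClusterEdge E T t u p} = {u | u ∉ T ∪ S ∧ E u r} := by
        intro p hp
        rcases Set.mem_insert_iff.1 hp.1 with rfl | hpS
        · obtain ⟨v, hvT, hvU⟩ := (tcm_recs'_t hE ht hS).1 hp
          exact ⟨v, hvU, tcm_pset'_t hE ht hS h3c (tcm_recsU_T hvT hvU)⟩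
        · exact ⟨p, (tcm_recs'_S hE ht hS hpS).1 hp, tcm_pset'_S hE ht hS hpS⟩
      intro p₁ hp₁ p₂ hp₂
      obtain ⟨r₁, hr₁, e₁⟩ := key p₁ hp₁
      obtain ⟨r₂, hr₂, e₂⟩ := key p₂ hp₂
      rw [e₁, e₂]
      exact hU3 r₁ hr₁ r₂ hr₂
    · -- condition 4 for insert t S
      have key : ∀ p ∈ emis (ClusterEdge E T t) (insert t S),
          ∃ e, e ∈ emis E (T ∪ S) ∧
            {u | u ∉ insert t S ∧ ClusterEdge E T t p u} = {u | u ∉ T ∪ S ∧ E e u} := by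
        intro p hp
        rcases Set.mem_insert_iff.1 hp.1 with rfl | hpS
        · obtain ⟨v, hvT, hvU⟩ := (tcm_emis'_t hE ht hS).1 hp
          exact ⟨v, hvU, tcm_cset'_t hE ht hS h4c (tcm_emisU_T hvT hvU)⟩
        · exact ⟨p, (tcm_emis'_S hE ht hS hpS).1 hp, tcm_cset'_S hE ht hS hpS⟩
      intro p₁ hp₁ p₂ hp₂
      obtain ⟨e₁, he₁, q₁⟩ := key p₁ hp₁
      obtain ⟨e₂, he₂, q₂⟩ := key p₂ hp₂
      rw [q₁, q₂]
      exact hU4 e₁ he₁ e₂ he₂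
    · -- condition 5 for insert t S
      intro x' hx'
      rcases Set.mem_insert_iff.1 hx' with rfl | hxS
      · obtain ⟨x₀, hx₀⟩ := hTne
        obtain ⟨w, hw, hpath⟩ := hU5 x₀ (Or.inl hx₀)
        have := tcm_map_undir hE ht hS h3c h4c (t := x') hpath
        rw [tcmProj_mem hx₀] at this
        exact ⟨tcmProj T x' w, hw.imp (tgtr w) (tgte w), this⟩
      · obtain ⟨w, hw, hpath⟩ := hU5 x' (Or.inr hxS)
        have := tcm_map_undir hE ht hS h3c h4c (t := t) hpath
        rw [tcmProj_not (fun h => (hS hxS).2 h)] at this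
        exact ⟨tcmProj T t w, hw.imp (tgtr w) (tgte w), this⟩
    · -- condition 6 for insert t S
      rintro ⟨e₀', he₀'⟩ r' hr'
      have hUem : (emis E (T ∪ S)).Nonempty := by
        rcases Set.mem_insert_iff.1 he₀'.1 with rfl | hs
        · obtain ⟨v, hvT, hvU⟩ := (tcm_emis'_t hE ht hS).1 he₀'
          exact ⟨v, hvU⟩
        · exact ⟨e₀', (tcm_emis'_S hE ht hS hs).1 he₀'⟩
      rcases Set.mem_insert_iff.1 hr'.1 with rfl | hrS
      · obtain ⟨v, hvT, hvU⟩ := (tcm_recs'_t hE ht hS).1 hr'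
        obtain ⟨e, heU, hpath⟩ := hU6 hUem v hvU
        have hm := tcm_map_dir (T := T) (t := r') hE ht hpath
        rw [tcmProj_mem hvT] at hm
        exact ⟨tcmProj T r' e, tgte e heU, hm⟩
      · obtain ⟨e, heU, hpath⟩ := hU6 hUem r' ((tcm_recs'_S hE ht hS hrS).1 hr')
        have hm := tcm_map_dir (T := T) (t := t) hE ht hpath
        rw [tcmProj_not (fun h => (hS hrS).2 h)] at hm
        exact ⟨tcmProj T t e, tgte e heU, hm⟩
    · -- condition 7 for insert t S
      rintro ⟨r₀', hr₀'⟩ e' he'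
      have hUrn : (recs E (T ∪ S)).Nonempty := by
        rcases Set.mem_insert_iff.1 hr₀'.1 with rfl | hs
        · obtain ⟨v, hvT, hvU⟩ := (tcm_recs'_t hE ht hS).1 hr₀'
          exact ⟨v, hvU⟩
        · exact ⟨r₀', (tcm_recs'_S hE ht hS hs).1 hr₀'⟩
      rcases Set.mem_insert_iff.1 he'.1 with rfl | heS
      · obtain ⟨v, hvT, hvU⟩ := (tcm_emis'_t hE ht hS).1 he'
        obtain ⟨r, hrU, hpath⟩ := hU7 hUrn v hvU
        have hm := tcm_map_dir (T := T) (t := e') hE ht hpath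
        rw [tcmProj_mem hvT] at hm
        exact ⟨tcmProj T e' r, tgtr r hrU, hm⟩
      · obtain ⟨r, hrU, hpath⟩ := hU7 hUrn e' ((tcm_emis'_S hE ht hS heS).1 he')
        have hm := tcm_map_dir (T := T) (t := t) hE ht hpath
        rw [tcmProj_not (fun h => (hS heS).2 h)] at hm
        exact ⟨tcmProj T t r, tgtr r hrU, hm⟩
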